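/- Let Y₀, Y₁, …, Y_r and Z be Banach spaces with continuous linear embeddings ι_{i,j}: Y_i → Y_j for i < j, let U ⊂ Y_r be open, and let F ∈ C^{r+1}(U, Z). Define F_r(y₀,…,y_r) = (d^r/dt^r)|_{t=0} F(∑_{j=0}^r t^j ι_{j,r}(y_j)). Then F_r is well defined and C¹ on ι_{0,r}^{-1}(U) × Y₁ × ⋯ × Y_r with values in Z. -/

import Mathlib

private lemma fderiv_comp_const_add'' {E F : Type*} [NormedAddCommGroup E] [NormedSpace ℝ E]
    [NormedAddCommGroup F] [NormedSpace ℝ F] (h : E → F) (c x : E) :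
    fderiv ℝ (fun z => h (c + z)) x = fderiv ℝ h (c + x) := by
  by_cases hd : DifferentiableAt ℝ h (c + x)
  · have h1 : HasFDerivAt (fun z : E => c + z) (ContinuousLinearMap.id ℝ E) x :=
      (hasFDerivAt_id x).const_add c
    simpa [Function.comp_def] using (hd.hasFDerivAt.comp x h1).fderiv
  · have hd2 : ¬ DifferentiableAt ℝ (fun z => h (c + z)) x := by
      intro H
      apply hd
      have heq : h = (fun z => h (c + z)) ∘ (fun w => -c + w) := by
        funext w; simp [Function.comp]
      rw [heq]
      exact DifferentiableAt.comp _ (by simpa using H) (differentiableAt_id.const_add _)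
    rw [fderiv_zero_of_not_differentiableAt hd, fderiv_zero_of_not_differentiableAt hd2]

private lemma iteratedFDeriv_comp_const_add' {E F : Type*} [NormedAddCommGroup E]
    [NormedSpace ℝ E] [NormedAddCommGroup F] [NormedSpace ℝ F] (i : ℕ) (h : E → F) (c : E) :
    (fun x => iteratedFDeriv ℝ i (fun z => h (c + z)) x)
      = fun x => iteratedFDeriv ℝ i h (c + x) := by
  induction i with
  | zero => funext x; ext m; simp
  | succ i IH =>
    funext x; ext m
    rw [iteratedFDeriv_succ_apply_left, iteratedFDeriv_succ_apply_left]
    rw [show fderiv ℝ (iteratedFDeriv ℝ i (fun z => h (c + z))) x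
        = fderiv ℝ (fun z => iteratedFDeriv ℝ i h (c + z)) x from
        congrArg (fun g => fderiv ℝ g x) IH,
      fderiv_comp_const_add'']

/-- **Differentiated composition maps are `C¹`.** Given Banach spaces `Y₀,…,Y_r`, `Y_r'`
(`Yr`), `Z`, continuous linear embeddings `ι j : Y j → Yr`, an open `U ⊆ Yr` and
`F ∈ C^{r+1}(U, Z)`, the map
`F_r(y₀,…,y_r) = (d^r/dt^r)|_{t=0} F(∑ t^j ι j (y j))`
is well defined and `C¹` on `{y | ι 0 (y 0) ∈ U} = ι₀⁻¹(U) × Y₁ × ⋯ × Y_r`. -/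
theorem stmt8 (r : ℕ)
    (Y : Fin (r + 1) → Type*) [∀ j, NormedAddCommGroup (Y j)]
    [∀ j, NormedSpace ℝ (Y j)] [∀ j, CompleteSpace (Y j)]
    (Yr Z : Type*) [NormedAddCommGroup Yr] [NormedSpace ℝ Yr] [CompleteSpace Yr]
    [NormedAddCommGroup Z] [NormedSpace ℝ Z] [CompleteSpace Z]
    (ι : ∀ j, Y j →L[ℝ] Yr) (hι : ∀ j, Function.Injective (ι j))
    (U : Set Yr) (hU : IsOpen U) (F : Yr → Z) (hF : ContDiffOn ℝ (r + 1) F U) :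
    ContDiffOn ℝ 1
      (fun y : ∀ j, Y j =>
        iteratedDeriv r (fun t : ℝ => F (∑ j : Fin (r + 1), t ^ (j : ℕ) • ι j (y j))) 0)
      {y : ∀ j, Y j | ι 0 (y 0) ∈ U} := by
  classical
  set S : ℝ × (∀ j, Y j) → Yr := fun p => ∑ j : Fin (r + 1), p.1 ^ (j : ℕ) • ι j (p.2 j)
    with hSdef
  have hScd : ContDiff ℝ (↑(r + 1)) S := by
    apply ContDiff.sum
    intro j _
    exact (contDiff_fst.pow _).smul ((ι j).contDiff.comp (contDiff_pi.mp contDiff_snd j))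
  set V := S ⁻¹' U with hVdef
  have hVopen : IsOpen V := hU.preimage hScd.continuous
  set G : ℝ × (∀ j, Y j) → Z := F ∘ S with hGdef
  have hG : ContDiffOn ℝ (↑(r + 1)) G V := hF.comp hScd.contDiffOn (fun p hp => hp)
  have hmem : ∀ y ∈ {y : ∀ j, Y j | ι 0 (y 0) ∈ U}, ((0 : ℝ), y) ∈ V := by
    intro y hy
    have hs : S ((0 : ℝ), y) = ι 0 (y 0) := by
      show (∑ j : Fin (r + 1), (0:ℝ) ^ (j : ℕ) • ι j (y j)) = ι 0 (y 0)
      rw [Finset.sum_eq_single 0]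
      · simp
      · intro j _ hj
        have hj' : (j : ℕ) ≠ 0 := fun h => hj (Fin.ext h)
        simp [zero_pow hj']
      · simp
    simpa [hVdef, Set.mem_preimage, hs] using hy
  have hmn : (1 : WithTop ℕ∞) + r ≤ ↑(r + 1) := by
    rw [add_comm]
    norm_cast
  have hIter : ContDiffOn ℝ 1 (iteratedFDerivWithin ℝ r G V) V := fun p hp =>
    (hG p hp).iteratedFDerivWithin_right hVopen.uniqueDiffOn hmn hp
  have hcurve : ContDiff ℝ 1 (fun y : ∀ j, Y j => ((0 : ℝ), y)) :=
    contDiff_const.prodMk contDiff_id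
  have hgood : ContDiffOn ℝ 1
      (fun y : ∀ j, Y j =>
        ContinuousMultilinearMap.apply ℝ (fun _ : Fin r => ℝ × (∀ j, Y j)) Z
          (fun _ => ((1 : ℝ), 0)) (iteratedFDerivWithin ℝ r G V ((0 : ℝ), y)))
      {y : ∀ j, Y j | ι 0 (y 0) ∈ U} := by
    exact (ContinuousMultilinearMap.apply ℝ (fun _ : Fin r => ℝ × (∀ j, Y j)) Z
      (fun _ => ((1 : ℝ), 0))).contDiff.comp_contDiffOn
      (hIter.comp hcurve.contDiffOn (fun y hy => hmem y hy))
  apply hgood.congr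
  intro y hy
  have hyV : ((0 : ℝ), y) ∈ V := hmem y hy
  set c : ℝ × (∀ j, Y j) := ((0 : ℝ), y) with hc
  set L : ℝ →L[ℝ] ℝ × (∀ j, Y j) := ContinuousLinearMap.inl ℝ ℝ (∀ j, Y j) with hLdef
  have hfun : (fun t : ℝ => F (∑ j : Fin (r + 1), t ^ (j : ℕ) • ι j (y j)))
      = (fun p => G (c + p)) ∘ L := by
    funext t
    simp [hGdef, hSdef, hc, hLdef, Function.comp]
  show iteratedDeriv r _ 0 = _
  rw [hfun, iteratedDeriv_eq_iteratedFDeriv]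
  set Vc := (fun p => c + p) ⁻¹' V with hVc
  have hVcopen : IsOpen Vc := hVopen.preimage (continuous_const.add continuous_id)
  have h0Vc : (0 : ℝ × (∀ j, Y j)) ∈ Vc := by simpa [hVc] using hyV
  have hGc : ContDiffOn ℝ (↑(r + 1)) (fun p => G (c + p)) Vc :=
    hG.comp ((contDiff_const.add contDiff_id).contDiffOn) (fun p hp => hp)
  have hLmem : L 0 ∈ Vc := by simpa using h0Vc
  have hpre : IsOpen (L ⁻¹' Vc) := hVcopen.preimage L.continuous
  have h0pre : (0 : ℝ) ∈ L ⁻¹' Vc := by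
    simp only [Set.mem_preimage, map_zero]; exact h0Vc
  rw [← iteratedFDerivWithin_of_isOpen r hpre h0pre]
  rw [L.iteratedFDerivWithin_comp_right hGc hVcopen.uniqueDiffOn hpre.uniqueDiffOn hLmem
    (by exact_mod_cast Nat.le_succ r : (r : WithTop ℕ∞) ≤ ↑(r + 1))]
  rw [iteratedFDerivWithin_of_isOpen r hVcopen hLmem]
  rw [congrFun (iteratedFDeriv_comp_const_add' r G c) (L 0)]
  have hcLV : c + L 0 ∈ V := by simpa using hyV
  rw [← iteratedFDerivWithin_of_isOpen r hVopen hcLV]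
  simp [ContinuousMultilinearMap.compContinuousLinearMap_apply,
    ContinuousMultilinearMap.apply_apply, hLdef, hc]
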